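/- Let Δ ≥ 1 and n, m be positive integers, let a = (a₁, …, a_n) be a (Δ/2)-diverse sequence over [1, m], and let ℓ be an integer with 0 ≤ ℓ ≤ m. Let π be a permutation of [1, m] drawn uniformly at random and let A = {i ∈ [1, n] : π(a_i) ≤ ℓ}. Then for every integer interval P ⊆ [1, n] of size ⌈Δ/2⌉, the probability that P ∩ A = ∅ is at most exp(−ℓ·|P|/m). -/

import Mathlib

/-- `FillGaps(A, Δ, I)`: `A` together with all maximal subintervals
`[i, i+Δ] ⊆ I ∖ A` of `Δ+1` consecutive integers disjoint from `A`. -/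
def FillGaps (A : Set ℕ) (Δ : ℕ) (I : Set ℕ) : Set ℕ :=
  A ∪ {x | ∃ i, x ∈ Set.Icc i (i + Δ) ∧ Set.Icc i (i + Δ) ⊆ I \ A}

/-- The local minimum function: `localMin b Δ i` is the smallest index
`j ∈ [i, i+Δ]` at which `b` attains its minimum on `[i, i+Δ]`. -/
noncomputable def localMin {β : Type*} [LinearOrder β] (b : ℕ → β) (Δ i : ℕ) : ℕ :=
  sInf {j | j ∈ Set.Icc i (i + Δ) ∧ ∀ t ∈ Set.Icc i (i + Δ), b j ≤ b t}

/-- A sequence `a` with positions `1..n` and values in `Fin m` (representing the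
alphabet `[1,m]` via `σ ↦ σ + 1`) is `(Δ/2)`-diverse: positions carrying equal
values are at distance greater than `Δ/2`. -/
def HalfDiverse (n Δ : ℕ) {m : ℕ} (a : ℕ → Fin m) : Prop :=
  ∀ i ∈ Set.Icc 1 n, ∀ j ∈ Set.Icc 1 n, a i = a j → i < j → Δ < 2 * (j - i)

open Finset

-- fiber comparison via swap
lemma fiber_le (m ℓ : ℕ) (S : Finset (Fin m)) (s0 : Fin m) (hs0 : s0 ∉ S)
    (v w : Fin m) (hv : ℓ ≤ (v : ℕ)) :
    (univ.filter fun π : Equiv.Perm (Fin m) =>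
        (∀ x ∈ S, ℓ ≤ ((π x : ℕ))) ∧ π s0 = v).card ≤
    (univ.filter fun π : Equiv.Perm (Fin m) =>
        (∀ x ∈ S, ℓ ≤ ((π x : ℕ))) ∧ π s0 = w).card := by
  apply Finset.card_le_card_of_injOn (fun π => Equiv.swap v w * π)
  · intro π hπ
    simp only [Finset.coe_filter, Finset.mem_coe, Set.mem_setOf_eq, Finset.mem_filter, Finset.mem_univ, true_and] at hπ ⊢
    obtain ⟨h1, h2⟩ := hπ
    refine ⟨fun x hx => ?_, by simp [h2, Equiv.swap_apply_left]⟩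
    have hne : π x ≠ v := by
      intro h
      exact hs0 (by rwa [← h2, π.injective.eq_iff] at h ▸ hx)
    rcases eq_or_ne (π x) w with h | h
    · simpa [Equiv.Perm.mul_apply, h, Equiv.swap_apply_right] using hv
    · simpa [Equiv.Perm.mul_apply, Equiv.swap_apply_of_ne_of_ne hne h] using h1 x hx
  · intro a _ b _ h
    exact mul_left_cancel h

lemma perm_count_le (m ℓ : ℕ) (S : Finset (Fin m)) :
    (univ.filter fun π : Equiv.Perm (Fin m) => ∀ s ∈ S, ℓ ≤ (π s : ℕ)).card * m ^ S.card
      ≤ (m - ℓ) ^ S.card * Nat.factorial m := by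
  induction S using Finset.induction_on with
  | empty => simp [Fintype.card_perm]
  | @insert s0 S hs0 ih =>
    have key : (univ.filter fun π : Equiv.Perm (Fin m) =>
        ∀ s ∈ insert s0 S, ℓ ≤ (π s : ℕ)).card * m ≤
        (m - ℓ) * (univ.filter fun π : Equiv.Perm (Fin m) => ∀ s ∈ S, ℓ ≤ (π s : ℕ)).card := by
      set T : Finset (Fin m) := univ.filter (fun v => ℓ ≤ (v : ℕ)) with hT
      have hTcard : T.card = m - ℓ := by
        have : T = (Finset.Ico ℓ m).attachFin (fun a ha => (Finset.mem_Ico.1 ha).2) := by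
          ext v
          simp [hT, Finset.mem_attachFin, Finset.mem_Ico, v.isLt]
        rw [this, Finset.card_attachFin, Nat.card_Ico]
      have h1 : (univ.filter fun π : Equiv.Perm (Fin m) =>
          ∀ s ∈ insert s0 S, ℓ ≤ (π s : ℕ)).card =
          ∑ v ∈ T, (univ.filter fun π : Equiv.Perm (Fin m) =>
            (∀ x ∈ S, ℓ ≤ ((π x : ℕ))) ∧ π s0 = v).card := by
        rw [Finset.card_eq_sum_card_fiberwise
          (f := fun π : Equiv.Perm (Fin m) => π s0) (t := T)
          (fun π hπ => by
            simp only [Finset.coe_filter, Finset.mem_coe, Set.mem_setOf_eq, Finset.mem_filter, Finset.mem_univ, true_and] at hπ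
            simp [hT, hπ s0 (Finset.mem_insert_self _ _)])]
        apply Finset.sum_congr rfl
        intro v hv
        congr 1
        ext π
        simp only [hT, Finset.mem_filter, Finset.mem_univ, true_and] at hv ⊢
        constructor
        · rintro ⟨h, h2⟩
          exact ⟨fun x hx => h x (Finset.mem_insert_of_mem hx), h2⟩
        · rintro ⟨h, h2⟩
          refine ⟨fun x hx => ?_, h2⟩
          rcases Finset.mem_insert.1 hx with rfl | hx
          · rw [h2]; exact hv
          · exact h x hx
      have h2 : (univ.filter fun π : Equiv.Perm (Fin m) => ∀ s ∈ S, ℓ ≤ (π s : ℕ)).card =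
          ∑ w ∈ (univ : Finset (Fin m)), (univ.filter fun π : Equiv.Perm (Fin m) =>
            (∀ x ∈ S, ℓ ≤ ((π x : ℕ))) ∧ π s0 = w).card := by
        rw [Finset.card_eq_sum_card_fiberwise
          (f := fun π : Equiv.Perm (Fin m) => π s0) (t := univ) (fun π _ => mem_univ _)]
        apply Finset.sum_congr rfl
        intro w _
        congr 1
        ext π
        simp only [Finset.mem_filter, Finset.mem_univ, true_and]
      rw [h1, h2, Finset.sum_mul]
      calc ∑ v ∈ T, (univ.filter fun π : Equiv.Perm (Fin m) =>
              (∀ x ∈ S, ℓ ≤ ((π x : ℕ))) ∧ π s0 = v).card * m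
          = ∑ v ∈ T, ∑ w ∈ (univ : Finset (Fin m)),
              (univ.filter fun π : Equiv.Perm (Fin m) =>
                (∀ x ∈ S, ℓ ≤ ((π x : ℕ))) ∧ π s0 = v).card := by
            simp [Finset.sum_const, Finset.card_univ, mul_comm]
        _ ≤ ∑ v ∈ T, ∑ w ∈ (univ : Finset (Fin m)),
              (univ.filter fun π : Equiv.Perm (Fin m) =>
                (∀ x ∈ S, ℓ ≤ ((π x : ℕ))) ∧ π s0 = w).card := by
            apply Finset.sum_le_sum
            intro v hv
            apply Finset.sum_le_sum
            intro w _
            exact fiber_le m ℓ S s0 hs0 v w (by simpa [hT] using hv)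
        _ = (m - ℓ) * ∑ w ∈ (univ : Finset (Fin m)),
              (univ.filter fun π : Equiv.Perm (Fin m) =>
                (∀ x ∈ S, ℓ ≤ ((π x : ℕ))) ∧ π s0 = w).card := by
            rw [Finset.sum_const, hTcard, smul_eq_mul]
    rw [Finset.card_insert_of_notMem hs0, pow_succ, pow_succ]
    calc (univ.filter fun π : Equiv.Perm (Fin m) =>
            ∀ s ∈ insert s0 S, ℓ ≤ (π s : ℕ)).card * (m ^ S.card * m)
        = ((univ.filter fun π : Equiv.Perm (Fin m) =>
            ∀ s ∈ insert s0 S, ℓ ≤ (π s : ℕ)).card * m) * m ^ S.card := by ring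
      _ ≤ ((m - ℓ) * (univ.filter fun π : Equiv.Perm (Fin m) =>
            ∀ s ∈ S, ℓ ≤ (π s : ℕ)).card) * m ^ S.card := by
          exact Nat.mul_le_mul_right _ key
      _ = (m - ℓ) * ((univ.filter fun π : Equiv.Perm (Fin m) =>
            ∀ s ∈ S, ℓ ≤ (π s : ℕ)).card * m ^ S.card) := by ring
      _ ≤ (m - ℓ) * ((m - ℓ) ^ S.card * Nat.factorial m) := Nat.mul_le_mul_left _ ih
      _ = (m - ℓ) ^ S.card * (m - ℓ) * Nat.factorial m := by ring
/-- for a `(Δ/2)`-diverse sequence `a` over `[1,m]`, `0 ≤ ℓ ≤ m`,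
a uniformly random permutation `π` of `[1,m]`, `A = {i ∈ [1,n] : π(aᵢ) ≤ ℓ}`,
and any interval `P ⊆ [1,n]` of size `⌈Δ/2⌉`, the probability that `P ∩ A = ∅`
is at most `exp(−ℓ·|P|/m)`. -/
theorem prob_interval_misses_A (n m Δ ℓ : ℕ) (hn : 0 < n) (hm : 0 < m)
    (hΔ : 1 ≤ Δ) (hℓ : ℓ ≤ m)
    (a : ℕ → Fin m) (hdiv : HalfDiverse n Δ a)
    (c : ℕ) (hP : Set.Icc c (c + (Δ + 1) / 2 - 1) ⊆ Set.Icc 1 n) :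
    ({π : Equiv.Perm (Fin m) |
        Set.Icc c (c + (Δ + 1) / 2 - 1) ∩
          {i | i ∈ Set.Icc 1 n ∧ (π (a i) : ℕ) + 1 ≤ ℓ} = ∅}.ncard : ℝ)
      / (Fintype.card (Equiv.Perm (Fin m)) : ℝ)
    ≤ Real.exp (-((ℓ : ℝ) * (((Δ + 1) / 2 : ℕ) : ℝ)) / (m : ℝ)) := by
  replace hdiv : ∀ i ∈ Set.Icc 1 n, ∀ j ∈ Set.Icc 1 n, a i = a j → i < j → Δ < 2 * (j - i) := hdiv
  set k : ℕ := (Δ + 1) / 2 with hk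
  have hk1 : 1 ≤ k := by omega
  -- the image finset
  set Pf : Finset ℕ := Finset.Icc c (c + k - 1) with hPf
  have hPmem : ∀ i ∈ Pf, i ∈ Set.Icc 1 n := by
    intro i hi
    exact hP (by simpa [hPf, Set.mem_Icc] using Finset.mem_Icc.1 hi)
  set S : Finset (Fin m) := Pf.image a with hS
  -- injectivity on Pf
  have hinj : Set.InjOn a Pf := by
    intro i hi j hj hij
    by_contra hne
    rcases Ne.lt_or_gt hne with h | h
    · have := hdiv i (hPmem i hi) j (hPmem j hj) hij h
      have hi' := Finset.mem_Icc.1 hi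
      have hj' := Finset.mem_Icc.1 hj
      omega
    · have := hdiv j (hPmem j hj) i (hPmem i hi) hij.symm h
      have hi' := Finset.mem_Icc.1 hi
      have hj' := Finset.mem_Icc.1 hj
      omega
  have hScard : S.card = k := by
    rw [hS, Finset.card_image_of_injOn hinj, Nat.card_Icc]
    omega
  -- identify the event set
  have hevent : {π : Equiv.Perm (Fin m) |
        Set.Icc c (c + k - 1) ∩ {i | i ∈ Set.Icc 1 n ∧ (π (a i) : ℕ) + 1 ≤ ℓ} = ∅} =
      ↑(univ.filter fun π : Equiv.Perm (Fin m) => ∀ s ∈ S, ℓ ≤ (π s : ℕ)) := by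
    ext π
    simp only [Set.mem_setOf_eq, Finset.coe_filter, Finset.mem_univ, true_and,
      Set.eq_empty_iff_forall_notMem, Set.mem_inter_iff, Set.mem_Icc, Set.mem_setOf_eq,
      not_and, hS, Finset.mem_image]
    constructor
    · rintro h s ⟨i, hi, rfl⟩
      have hi' := Finset.mem_Icc.1 hi
      have := h i
      have hmem := hPmem i hi
      simp only [Set.mem_Icc] at hmem
      omega
    · intro h i hi1 hi2
      have hi : i ∈ Pf := Finset.mem_Icc.2 hi1
      have := h (a i) ⟨i, hi, rfl⟩
      omega
  have hcount := perm_count_le m ℓ S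
  rw [hScard] at hcount
  rw [hevent, Set.ncard_coe_finset]
  -- real arithmetic
  have hfact : (Fintype.card (Equiv.Perm (Fin m)) : ℝ) = (Nat.factorial m : ℝ) := by
    rw [Fintype.card_perm, Fintype.card_fin]
  rw [hfact]
  have hfpos : (0 : ℝ) < (Nat.factorial m : ℝ) := by positivity
  have hmpos : (0 : ℝ) < (m : ℝ) := by exact_mod_cast hm
  have step1 : ((univ.filter fun π : Equiv.Perm (Fin m) => ∀ s ∈ S, ℓ ≤ (π s : ℕ)).card : ℝ)
      / (Nat.factorial m : ℝ) ≤ (((m : ℝ) - ℓ) / m) ^ k := by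
    rw [div_pow, div_le_div_iff₀ hfpos (by positivity)]
    have : ((m : ℝ) - ℓ) ^ k = ((m - ℓ : ℕ) : ℝ) ^ k := by
      rw [Nat.cast_sub hℓ]
    rw [this]
    have := hcount
    push_cast
    exact_mod_cast Nat.cast_le.2 hcount
  refine step1.trans ?_
  have hbase : ((m : ℝ) - ℓ) / m ≤ Real.exp (-(ℓ / m : ℝ)) := by
    have h1 : -((ℓ : ℝ) / m) + 1 ≤ Real.exp (-(ℓ / m : ℝ)) := Real.add_one_le_exp _
    have h2 : ((m : ℝ) - ℓ) / m = -((ℓ : ℝ) / m) + 1 := by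
      field_simp
      ring
    rw [h2]; exact h1
  have hbn : (0 : ℝ) ≤ ((m : ℝ) - ℓ) / m := by
    apply div_nonneg _ hmpos.le
    have : (ℓ : ℝ) ≤ m := by exact_mod_cast hℓ
    linarith
  calc (((m : ℝ) - ℓ) / m) ^ k ≤ (Real.exp (-(ℓ / m : ℝ))) ^ k :=
        pow_le_pow_left₀ hbn hbase k
    _ = Real.exp (-((ℓ : ℝ) * k) / m) := by
        rw [← Real.exp_nat_mul]
        congr 1
        ring
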